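/- (Noise energy bound under variable density sampling) Let M < N be integers, β a random variable on {1,...,N} with pmf η, and suppose ρ ≥ 1 satisfies (1/N) sup_{q≥1} (1/q)(E η(β)^{-q})^{1/q} ≤ ρ. Let Ω = {Ω₁,...,Ω_M} with Ω_j i.i.d. copies of β, and let D ∈ ℝ^{M×M} be diagonal with D_{jj} = 1/√(η(Ω_j)). Then for any fixed vector n ∈ ℂ^M and any s > 0, with probability at least 1 - e^{-s/2}, (1/M)‖D n‖² ≤ (N/M)‖n‖² + 4e · max{s/M, √(s/M)} · ρ ‖n‖_∞² N. -/

import Mathlib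

open Finset

/-- `q^q / q! ≤ e^q`. -/
lemma aux_pow_self_div_factorial_le_exp (q : ℕ) :
    (q : ℝ) ^ q / q.factorial ≤ Real.exp q := by
  calc (q : ℝ) ^ q / q.factorial
      ≤ ∑ i ∈ Finset.range (q + 1), (q : ℝ) ^ i / i.factorial := by
        refine Finset.single_le_sum (f := fun i => (q : ℝ) ^ i / i.factorial)
          (fun i _ => by positivity) ?_
        simp
    _ ≤ Real.exp q := Real.sum_le_exp_of_nonneg (by positivity) _

/-- numeric endgame -/
lemma aux_num_bound {M s t : ℝ} (hM : 1 ≤ M) (hs : 0 < s)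
    (h1 : s / M ≤ t) (h2 : Real.sqrt s / Real.sqrt M ≤ t) :
    2 * M * (min t (1/2)) ^ 2 - 4 * M * t * (min t (1/2)) ≤ -s / 2 := by
  have hM0 : (0:ℝ) < M := by linarith
  have hts : s ≤ t * M := (div_le_iff₀ hM0).1 h1
  have ht0 : 0 < t := lt_of_lt_of_le (div_pos hs hM0) h1
  rcases min_cases t (1/2) with ⟨hmin, hle⟩ | ⟨hmin, hlt⟩
  · rw [hmin]
    have hsqM : (0:ℝ) < Real.sqrt M := Real.sqrt_pos.2 hM0
    have h2' : Real.sqrt s ≤ t * Real.sqrt M := (div_le_iff₀ hsqM).1 h2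
    have hsle : s ≤ (t * Real.sqrt M) ^ 2 := by
      rw [← Real.sq_sqrt hs.le]
      exact pow_le_pow_left₀ (Real.sqrt_nonneg _) h2' 2
    rw [mul_pow, Real.sq_sqrt hM0.le] at hsle
    nlinarith
  · rw [hmin]
    nlinarith

/-- per-coordinate MGF bound -/
lemma aux_mgf_bound {N : ℕ} (η : Fin N → ℝ) (hpos : ∀ l, 0 < η l)
    (hsum : ∑ l, η l = 1) {ρ K θ u : ℝ}
    (hmom : ∀ q : ℕ, 1 ≤ q → ∑ l, η l * ((η l)⁻¹) ^ q ≤ (ρ * N * q) ^ q)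
    (hρK : 0 ≤ ρ * K * N)
    (hθ : 0 ≤ θ) (huL : θ * (Real.exp 1 * (ρ * K * N)) = u) (hu2 : u ≤ 1/2)
    {c : ℝ} (hc0 : 0 ≤ c) (hcK : c ≤ K) (hK0 : 0 ≤ K) :
    ∑ l, η l * Real.exp (θ * (c / η l)) ≤ Real.exp (θ * c * N + 2 * u ^ 2) := by
  have hu0 : 0 ≤ u := by
    rw [← huL]; positivity
  have hu1 : u < 1 := lt_of_le_of_lt hu2 (by norm_num)
  have hexp : ∀ x : ℝ, Real.exp x = ∑' q : ℕ, x ^ q / q.factorial := by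
    intro x
    rw [Real.exp_eq_exp_ℝ, NormedSpace.exp_eq_tsum_div]
  set F : ℕ → ℝ := fun q => ∑ l, η l * ((θ * (c / η l)) ^ q / q.factorial) with hF
  have hsummand : ∀ l : Fin N, Summable (fun q : ℕ =>
      η l * ((θ * (c / η l)) ^ q / q.factorial)) :=
    fun l => (Real.summable_pow_div_factorial _).mul_left (η l)
  have hFsum : Summable F := summable_sum (fun l _ => hsummand l)
  have hLHS : ∑ l, η l * Real.exp (θ * (c / η l)) = ∑' q, F q := by
    calc ∑ l, η l * Real.exp (θ * (c / η l))
        = ∑ l, ∑' q : ℕ, η l * ((θ * (c / η l)) ^ q / q.factorial) := by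
          refine Finset.sum_congr rfl fun l _ => ?_
          rw [hexp, tsum_mul_left]
      _ = ∑' q, F q := (Summable.tsum_finsetSum fun l _ => hsummand l).symm
  have hF0 : F 0 = 1 := by simp [hF, hsum]
  have hF1 : F 1 = θ * c * N := by
    simp only [hF, pow_one, Nat.factorial_one, Nat.cast_one, div_one]
    have h1 : ∀ l : Fin N, η l * (θ * (c / η l)) = θ * c := by
      intro l
      have hne : η l ≠ 0 := (hpos l).ne'
      field_simp
    rw [Finset.sum_congr rfl fun l _ => h1 l]
    rw [Finset.sum_const, Finset.card_univ, Fintype.card_fin, nsmul_eq_mul]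
    ring
  have hFq : ∀ q : ℕ, F (q + 2) ≤ u ^ (q + 2) := by
    intro q
    set m := q + 2 with hm
    have hm1 : 1 ≤ m := by omega
    have h1 : F m = (θ ^ m / m.factorial) * ∑ l, η l * (c ^ m * ((η l)⁻¹) ^ m) := by
      rw [hF, Finset.mul_sum]
      refine Finset.sum_congr rfl fun l _ => ?_
      have hne : η l ≠ 0 := (hpos l).ne'
      field_simp
      ring
    have h2 : ∑ l, η l * (c ^ m * ((η l)⁻¹) ^ m) ≤ K ^ m * (ρ * N * m) ^ m := by
      have hc : c ^ m ≤ K ^ m := pow_le_pow_left₀ hc0 hcK m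
      calc ∑ l, η l * (c ^ m * ((η l)⁻¹) ^ m)
          ≤ ∑ l, η l * (K ^ m * ((η l)⁻¹) ^ m) := by
            refine Finset.sum_le_sum fun l _ => ?_
            have hinv : (0:ℝ) ≤ ((η l)⁻¹) ^ m := pow_nonneg (inv_nonneg.2 (hpos l).le) m
            exact mul_le_mul_of_nonneg_left
              (mul_le_mul_of_nonneg_right hc hinv) (hpos l).le
        _ = K ^ m * ∑ l, η l * ((η l)⁻¹) ^ m := by
            rw [Finset.mul_sum]; exact Finset.sum_congr rfl fun l _ => by ring
        _ ≤ K ^ m * (ρ * N * m) ^ m :=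
            mul_le_mul_of_nonneg_left (hmom m hm1) (by positivity)
    calc F m ≤ (θ ^ m / m.factorial) * (K ^ m * (ρ * N * m) ^ m) := by
          rw [h1]
          exact mul_le_mul_of_nonneg_left h2 (by positivity)
      _ = (θ * (ρ * K * N)) ^ m * ((m : ℝ) ^ m / m.factorial) := by
          ring
      _ ≤ (θ * (ρ * K * N)) ^ m * Real.exp m :=
          mul_le_mul_of_nonneg_left (aux_pow_self_div_factorial_le_exp m)
            (by positivity)
      _ = (θ * (ρ * K * N)) ^ m * (Real.exp 1) ^ m := by
          rw [show ((m : ℕ) : ℝ) = ((m : ℕ) : ℝ) * (1:ℝ) by ring, Real.exp_nat_mul]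
      _ = u ^ m := by rw [← huL]; ring
  have htail : ∑' q : ℕ, F (q + 2) ≤ 2 * u ^ 2 := by
    have hsumF2 : Summable (fun q : ℕ => F (q + 2)) := (summable_nat_add_iff 2).2 hFsum
    have hsumu : Summable (fun q : ℕ => u ^ 2 * u ^ q) :=
      (summable_geometric_of_lt_one hu0 hu1).mul_left _
    calc ∑' q : ℕ, F (q + 2) ≤ ∑' q : ℕ, u ^ 2 * u ^ q := by
          refine Summable.tsum_le_tsum (fun q => ?_) hsumF2 hsumu
          calc F (q + 2) ≤ u ^ (q + 2) := hFq q
            _ = u ^ 2 * u ^ q := by ring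
      _ = u ^ 2 * (1 - u)⁻¹ := by
          rw [tsum_mul_left, tsum_geometric_of_lt_one hu0 hu1]
      _ ≤ u ^ 2 * 2 := by
          refine mul_le_mul_of_nonneg_left ?_ (sq_nonneg u)
          have h12 : (1:ℝ)/2 ≤ 1 - u := by linarith
          calc (1 - u)⁻¹ ≤ ((1:ℝ)/2)⁻¹ := by
                exact inv_anti₀ (by norm_num) h12
            _ = 2 := by norm_num
      _ = 2 * u ^ 2 := by ring
  have hsplit : ∑' q, F q = F 0 + (F 1 + ∑' q : ℕ, F (q + 1 + 1)) := by
    rw [Summable.tsum_eq_zero_add hFsum, Summable.tsum_eq_zero_add ((summable_nat_add_iff 1).2 hFsum)]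
  rw [hLHS, hsplit, hF0, hF1]
  have htail' : ∑' q : ℕ, F (q + 1 + 1) ≤ 2 * u ^ 2 := htail
  have hexp1 : θ * c * ↑N + 2 * u ^ 2 + 1 ≤ Real.exp (θ * c * ↑N + 2 * u ^ 2) :=
    Real.add_one_le_exp _
  linarith

/-- noise energy bound under variable density sampling.
The sample space of the `M` i.i.d. indices `Ω₁,…,Ω_M` drawn from the pmf `η` is
`Fin M → Fin N` with product weights `∏_j η(ω j)`; the probability that
`(1/M)‖Dn‖² = (1/M) Σ_j |n_j|²/η(Ω_j)` exceeds
`(N/M)‖n‖² + 4e·max{s/M, √s/√M}·ρ‖n‖_∞² N` is at most `e^{-s/2}`. -/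
theorem vds_noise_energy_bound (N M : ℕ) (hM : 0 < M) (hMN : M < N)
    (η : Fin N → ℝ) (hpos : ∀ l, 0 < η l) (hsum : ∑ l, η l = 1)
    (ρ : ℝ) (hρ1 : 1 ≤ ρ)
    (hρ : ∀ q : ℝ, 1 ≤ q →
      ((N : ℝ))⁻¹ * (q⁻¹ * (∑ l, η l * (η l) ^ (-q)) ^ q⁻¹) ≤ ρ)
    (n : Fin M → ℂ) (s : ℝ) (hs : 0 < s) :
    ∑ ω ∈ Finset.univ.filter (fun ω : Fin M → Fin N =>
        ((N : ℝ) / M) * (∑ j, ‖n j‖ ^ 2) +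
            4 * Real.exp 1 * max (s / M) (Real.sqrt s / Real.sqrt M) * ρ *
              (Finset.univ.sup' ⟨⟨0, hM⟩, Finset.mem_univ _⟩
                  (fun j => ‖n j‖)) ^ 2 * N <
          (1 / (M : ℝ)) * ∑ j, ‖n j‖ ^ 2 / η (ω j)),
      ∏ j, η (ω j) ≤ Real.exp (-s / 2) := by
  have hN0 : (0:ℝ) < N := by exact_mod_cast (hM.trans hMN)
  have hM0 : (0:ℝ) < M := by exact_mod_cast hM
  have hM1 : (1:ℝ) ≤ M := by exact_mod_cast hM
  have hMne : (M:ℝ) ≠ 0 := hM0.ne'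
  set K0 : ℝ := Finset.univ.sup' ⟨⟨0, hM⟩, Finset.mem_univ _⟩
      (fun j => ‖n j‖) with hK0def
  have hK0ge : ∀ j, ‖n j‖ ≤ K0 := by
    intro j
    rw [hK0def]
    exact Finset.le_sup' (fun j => ‖n j‖) (Finset.mem_univ j)
  have hK00 : 0 ≤ K0 := le_trans (norm_nonneg _) (hK0ge ⟨0, hM⟩)
  set t : ℝ := max (s / M) (Real.sqrt s / Real.sqrt M) with htdef
  have ht1 : s / M ≤ t := le_max_left _ _
  have ht2 : Real.sqrt s / Real.sqrt M ≤ t := le_max_right _ _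
  have ht0 : 0 < t := lt_of_lt_of_le (div_pos hs hM0) ht1
  -- moment bound
  have hmom : ∀ q : ℕ, 1 ≤ q → ∑ l, η l * ((η l)⁻¹) ^ q ≤ (ρ * N * q) ^ q := by
    intro q hq
    have hq0 : q ≠ 0 := by omega
    have hq1 : (1:ℝ) ≤ (q:ℝ) := by exact_mod_cast hq
    have hqR0 : (0:ℝ) < (q:ℝ) := by linarith
    have h := hρ q hq1
    have hrw : (∑ l, η l * (η l) ^ (-(q:ℝ))) = ∑ l, η l * ((η l)⁻¹) ^ q := by
      refine Finset.sum_congr rfl fun l _ => ?_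
      rw [Real.rpow_neg (hpos l).le, Real.rpow_natCast, inv_pow]
    rw [hrw] at h
    set S := ∑ l, η l * ((η l)⁻¹) ^ q with hSdef
    have hS0 : 0 ≤ S := Finset.sum_nonneg fun l _ => by
      have := hpos l; positivity
    have hX0 : 0 ≤ S ^ ((q:ℝ))⁻¹ := Real.rpow_nonneg hS0 _
    have hX : S ^ ((q:ℝ))⁻¹ ≤ ρ * N * q := by
      have h2 : S ^ ((q:ℝ))⁻¹ / ((N:ℝ) * (q:ℝ)) ≤ ρ := by
        calc S ^ ((q:ℝ))⁻¹ / ((N:ℝ) * (q:ℝ))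
            = ((N : ℝ))⁻¹ * ((q:ℝ)⁻¹ * S ^ ((q:ℝ))⁻¹) := by ring
          _ ≤ ρ := h
      have hNq : (0:ℝ) < (N:ℝ) * (q:ℝ) := by positivity
      have := (div_le_iff₀ hNq).1 h2
      linarith
    calc S = (S ^ ((q:ℝ))⁻¹) ^ q := (Real.rpow_inv_natCast_pow hS0 hq0).symm
      _ ≤ (ρ * N * q) ^ q := pow_le_pow_left₀ hX0 hX q
  by_cases hK0z : K0 = 0
  · -- all entries zero: the event is empty
    have hz : ∀ j, ‖n j‖ = 0 := fun j =>
      le_antisymm (hK0z ▸ hK0ge j) (norm_nonneg _)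
    have hempty : (Finset.univ.filter (fun ω : Fin M → Fin N =>
        ((N : ℝ) / M) * (∑ j, ‖n j‖ ^ 2) +
            4 * Real.exp 1 * t * ρ * K0 ^ 2 * N <
          (1 / (M : ℝ)) * ∑ j, ‖n j‖ ^ 2 / η (ω j))) = ∅ := by
      refine Finset.filter_eq_empty_iff.mpr fun ω _ => ?_
      simp [hz, hK0z]
    rw [hempty, Finset.sum_empty]
    exact (Real.exp_pos _).le
  have hK0pos : 0 < K0 := lt_of_le_of_ne hK00 (Ne.symm hK0z)
  have hρ0 : (0:ℝ) < ρ := by linarith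
  set K : ℝ := K0 ^ 2 with hKdef
  have hKpos : 0 < K := by positivity
  set L : ℝ := Real.exp 1 * (ρ * K * N) with hLdef
  have hLpos : 0 < L := by
    have := Real.exp_pos 1
    positivity
  set u : ℝ := min t (1/2) with hudef
  have hu0 : 0 ≤ u := le_min ht0.le (by norm_num)
  have hu2 : u ≤ 1/2 := min_le_right _ _
  set θ : ℝ := u / L with hθdef
  have hθ0 : 0 ≤ θ := div_nonneg hu0 hLpos.le
  have huL : θ * L = u := div_mul_cancel₀ _ hLpos.ne'
  -- abbreviations
  set T : ℝ := ((N : ℝ) / M) * (∑ j, ‖n j‖ ^ 2) +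
      4 * Real.exp 1 * t * ρ * K0 ^ 2 * N with hTdef
  set A : ℝ := (M : ℝ) * T with hAdef
  have hmgf : ∀ j : Fin M,
      ∑ l, η l * Real.exp (θ * (‖n j‖ ^ 2 / η l)) ≤
        Real.exp (θ * (‖n j‖ ^ 2) * N + 2 * u ^ 2) := by
    intro j
    refine aux_mgf_bound η hpos hsum hmom ?_ hθ0 ?_ hu2 ?_ ?_ hKpos.le
    · positivity
    · rw [← hLdef]; exact huL
    · positivity
    · exact pow_le_pow_left₀ (norm_nonneg _) (hK0ge j) 2
  have hprodnn : ∀ ω : Fin M → Fin N, (0:ℝ) ≤ ∏ j, η (ω j) :=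
    fun ω => Finset.prod_nonneg fun j _ => (hpos _).le
  calc ∑ ω ∈ Finset.univ.filter (fun ω : Fin M → Fin N =>
        T < (1 / (M : ℝ)) * ∑ j, ‖n j‖ ^ 2 / η (ω j)),
      ∏ j, η (ω j)
      ≤ ∑ ω ∈ Finset.univ.filter (fun ω : Fin M → Fin N =>
          T < (1 / (M : ℝ)) * ∑ j, ‖n j‖ ^ 2 / η (ω j)),
        (∏ j, η (ω j)) *
          Real.exp (θ * ((∑ j, ‖n j‖ ^ 2 / η (ω j)) - A)) := by
        refine Finset.sum_le_sum fun ω hω => ?_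
        have hmem := (Finset.mem_filter.mp hω).2
        have hSA : A ≤ ∑ j, ‖n j‖ ^ 2 / η (ω j) := by
          have hlt := mul_lt_mul_of_pos_left hmem hM0
          rw [hAdef]
          calc (M:ℝ) * T ≤ (M:ℝ) * ((1 / (M : ℝ)) *
              ∑ j, ‖n j‖ ^ 2 / η (ω j)) := hlt.le
            _ = ∑ j, ‖n j‖ ^ 2 / η (ω j) := by
              field_simp
        nth_rewrite 1 [← mul_one (∏ j, η (ω j))]
        refine mul_le_mul_of_nonneg_left ?_ (hprodnn ω)
        exact Real.one_le_exp (mul_nonneg hθ0 (sub_nonneg.2 hSA))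
    _ ≤ ∑ ω : Fin M → Fin N, (∏ j, η (ω j)) *
          Real.exp (θ * ((∑ j, ‖n j‖ ^ 2 / η (ω j)) - A)) := by
        refine Finset.sum_le_sum_of_subset_of_nonneg (Finset.filter_subset _ _)
          fun ω _ _ => ?_
        exact mul_nonneg (hprodnn ω) (Real.exp_pos _).le
    _ = Real.exp (-(θ * A)) * ∑ ω : Fin M → Fin N,
          ∏ j, (η (ω j) * Real.exp (θ * (‖n j‖ ^ 2 / η (ω j)))) := by
        rw [Finset.mul_sum]
        refine Finset.sum_congr rfl fun ω _ => ?_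
        rw [Finset.prod_mul_distrib, ← Real.exp_sum]
        have hrw2 : θ * ((∑ j, ‖n j‖ ^ 2 / η (ω j)) - A) =
            -(θ * A) + ∑ j, θ * (‖n j‖ ^ 2 / η (ω j)) := by
          rw [← Finset.mul_sum]
          ring
        rw [hrw2, Real.exp_add]
        ring
    _ = Real.exp (-(θ * A)) *
          ∏ j, ∑ l, (η l * Real.exp (θ * (‖n j‖ ^ 2 / η l))) := by
        rw [Finset.prod_univ_sum, Fintype.piFinset_univ]
    _ ≤ Real.exp (-(θ * A)) *
          ∏ j, Real.exp (θ * (‖n j‖ ^ 2) * N + 2 * u ^ 2) := by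
        refine mul_le_mul_of_nonneg_left ?_ (Real.exp_pos _).le
        refine Finset.prod_le_prod (fun j _ => ?_) (fun j _ => hmgf j)
        exact Finset.sum_nonneg fun l _ =>
          mul_nonneg (hpos l).le (Real.exp_pos _).le
    _ = Real.exp (-(θ * A) + ∑ j, (θ * (‖n j‖ ^ 2) * N + 2 * u ^ 2)) := by
        rw [← Real.exp_sum, ← Real.exp_add]
    _ ≤ Real.exp (-s / 2) := by
        rw [Real.exp_le_exp]
        have hsum1 : ∑ j, (θ * (‖n j‖ ^ 2) * N + 2 * u ^ 2) =
            θ * N * (∑ j, ‖n j‖ ^ 2) + M * (2 * u ^ 2) := by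
          rw [Finset.sum_add_distrib, Finset.sum_const, Finset.card_univ,
            Fintype.card_fin, nsmul_eq_mul]
          congr 1
          rw [Finset.mul_sum]
          exact Finset.sum_congr rfl fun j _ => by ring
        have hA : θ * A = θ * N * (∑ j, ‖n j‖ ^ 2) + 4 * M * t * u := by
          rw [hAdef, hTdef, ← huL, hLdef, hKdef]
          field_simp
        rw [hsum1, hA]
        have hnum := aux_num_bound hM1 hs ht1 ht2
        rw [← hudef] at hnum
        linarith
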